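/- Define f₃(z) = ∑_{k=1}^∞ z^k / k^{k+1}. Then f₃ is entire, and for all z ∈ ℂ, f₃(z) = ∫₀^∞ (1+u)^{-1} G(ln(1+u)) [exp(z e^{-1}/(1+u)) − 1] du, where G(p) = s₂'(1+p) − s₁'(1+p) and s₁, s₂ are the two inverse branches of s − ln s. -/

import Mathlib

open MeasureTheory Set Real

noncomputable section Stmt13AuxAll

noncomputable section Stmt13Aux

private def phiFn (x : ℝ) : ℝ := x - Real.log x

private lemma phiFn_hasDerivAt {x : ℝ} (hx : x ≠ 0) : HasDerivAt phiFn (1 - x⁻¹) x :=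
  (hasDerivAt_id x).sub (Real.hasDerivAt_log hx)

private lemma phiFn_one : phiFn 1 = 1 := by simp [phiFn]

private lemma phiFn_strictMonoOn : StrictMonoOn phiFn (Ici 1) := by
  apply strictMonoOn_of_deriv_pos (convex_Ici 1)
  · exact continuousOn_id.sub (Real.continuousOn_log.mono (fun x hx => by
      simp only [mem_compl_iff, mem_singleton_iff]
      intro h; rw [h] at hx; exact absurd hx (by norm_num)))
  · intro x hx
    rw [interior_Ici] at hx
    rw [(phiFn_hasDerivAt (by intro h; rw [h] at hx; exact absurd hx (by norm_num))).deriv]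
    have h1 : (1:ℝ) < x := hx
    have : x⁻¹ < 1 := inv_lt_one_of_one_lt₀ h1
    linarith

private lemma phiFn_strictAntiOn : StrictAntiOn phiFn (Ioc 0 1) := by
  apply strictAntiOn_of_deriv_neg (convex_Ioc 0 1)
  · exact continuousOn_id.sub (Real.continuousOn_log.mono (fun x hx => by
      simp only [mem_compl_iff, mem_singleton_iff]
      intro h; rw [h] at hx; exact absurd hx.1 (by norm_num)))
  · intro x hx
    rw [interior_Ioc] at hx
    rw [(phiFn_hasDerivAt (ne_of_gt hx.1)).deriv]
    have : 1 < x⁻¹ := (one_lt_inv₀ hx.1).2 hx.2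
    linarith

section branches
variable {s₁ s₂ : ℝ → ℝ}
  (h₁ : ∀ t ∈ Ici (1 : ℝ), s₁ t ∈ Ioc (0 : ℝ) 1 ∧ s₁ t - Real.log (s₁ t) = t)
  (h₂ : ∀ t ∈ Ici (1 : ℝ), s₂ t ∈ Ici (1 : ℝ) ∧ s₂ t - Real.log (s₂ t) = t)

include h₂ in
private lemma s2_gt_one {t : ℝ} (ht : 1 < t) : 1 < s₂ t := by
  obtain ⟨hmem, heq⟩ := h₂ t (le_of_lt ht)
  rcases lt_or_eq_of_le (mem_Ici.1 hmem : (1:ℝ) ≤ s₂ t) with h | h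
  · exact h
  · exfalso; rw [← h] at heq; simp at heq; linarith

include h₁ in
private lemma s1_mem {t : ℝ} (ht : 1 < t) : s₁ t ∈ Ioo (0:ℝ) 1 := by
  obtain ⟨hmem, heq⟩ := h₁ t (le_of_lt ht)
  refine ⟨hmem.1, lt_of_le_of_ne hmem.2 ?_⟩
  intro h; rw [h] at heq; simp at heq; linarith

include h₂ in
private lemma s2_image : s₂ '' Ioi 1 = Ioi (1:ℝ) := by
  apply Subset.antisymm
  · rintro _ ⟨t, ht, rfl⟩; exact s2_gt_one h₂ ht
  · intro y hy
    have hy1 : (1:ℝ) < y := hy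
    have hty : 1 < phiFn y := by
      have := phiFn_strictMonoOn (le_refl (1:ℝ)) (le_of_lt hy1) hy1
      rwa [phiFn_one] at this
    refine ⟨phiFn y, hty, ?_⟩
    have h := h₂ (phiFn y) (le_of_lt hty)
    exact phiFn_strictMonoOn.injOn h.1 (le_of_lt hy1) h.2
  
include h₁ in
private lemma s1_image : s₁ '' Ioi 1 = Ioo (0:ℝ) 1 := by
  apply Subset.antisymm
  · rintro _ ⟨t, ht, rfl⟩; exact s1_mem h₁ ht
  · intro y hy
    have hty : 1 < phiFn y := by
      have := phiFn_strictAntiOn ⟨hy.1, le_of_lt hy.2⟩ (by norm_num) hy.2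
      rwa [phiFn_one] at this
    refine ⟨phiFn y, hty, ?_⟩
    have h := h₁ (phiFn y) (le_of_lt hty)
    exact phiFn_strictAntiOn.injOn ⟨(h.1).1, (h.1).2⟩ ⟨hy.1, le_of_lt hy.2⟩ h.2

include h₂ in
private lemma s2_strictMonoOn : StrictMonoOn s₂ (Ioi 1) := by
  intro a ha b hb hab
  by_contra h
  push_neg at h
  have h2a := h₂ a (Ioi_subset_Ici_self ha)
  have h2b := h₂ b (Ioi_subset_Ici_self hb)
  have : phiFn (s₂ b) ≤ phiFn (s₂ a) :=
    phiFn_strictMonoOn.monotoneOn h2b.1 h2a.1 h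
  simp only [phiFn] at this
  rw [h2a.2, h2b.2] at this
  linarith

include h₂ in
private lemma s2_continuousAt {t : ℝ} (ht : 1 < t) : ContinuousAt s₂ t := by
  apply (s2_strictMonoOn h₂).continuousAt_of_image_mem_nhds (isOpen_Ioi.mem_nhds ht)
  rw [s2_image h₂]
  exact isOpen_Ioi.mem_nhds (s2_gt_one h₂ ht)

include h₁ in
private lemma s1_continuousAt {t : ℝ} (ht : 1 < t) : ContinuousAt s₁ t := by
  have hmono : StrictMonoOn (fun u => -(s₁ u)) (Ioi 1) := by
    intro a ha b hb hab
    simp only [neg_lt_neg_iff]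
    by_contra h
    push_neg at h
    have h1a := h₁ a (Ioi_subset_Ici_self ha)
    have h1b := h₁ b (Ioi_subset_Ici_self hb)
    have : phiFn (s₁ b) ≤ phiFn (s₁ a) :=
      phiFn_strictAntiOn.antitoneOn h1a.1 h1b.1 h
    simp only [phiFn] at this
    rw [h1a.2, h1b.2] at this
    linarith
  have himg : (fun u => -(s₁ u)) '' Ioi 1 = Ioo (-1 : ℝ) 0 := by
    have : (fun u => -(s₁ u)) = (fun x => -x) ∘ s₁ := rfl
    rw [this, image_comp, s1_image h₁]
    ext x; simp only [mem_image, mem_Ioo]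
    constructor
    · rintro ⟨y, hy, rfl⟩; constructor <;> linarith [hy.1, hy.2]
    · intro hx; exact ⟨-x, ⟨by linarith [hx.2], by linarith [hx.1]⟩, by ring⟩
  have hc : ContinuousAt (fun u => -(s₁ u)) t := by
    apply hmono.continuousAt_of_image_mem_nhds (isOpen_Ioi.mem_nhds ht)
    rw [himg]
    have := s1_mem h₁ ht
    exact isOpen_Ioo.mem_nhds ⟨by linarith [this.2], by linarith [this.1]⟩
  have : s₁ = fun u => -(-(s₁ u)) := by funext u; ring
  rw [this]
  exact hc.neg

include h₂ in
private lemma s2_hasDerivAt {t : ℝ} (ht : 1 < t) :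
    HasDerivAt s₂ ((1 - (s₂ t)⁻¹)⁻¹) t := by
  have hy := s2_gt_one h₂ ht
  apply HasDerivAt.of_local_left_inverse (s2_continuousAt h₂ ht)
    (phiFn_hasDerivAt (by linarith))
  · have : (s₂ t)⁻¹ < 1 := inv_lt_one_of_one_lt₀ hy
    linarith
  · filter_upwards [isOpen_Ioi.mem_nhds ht] with u hu
    exact (h₂ u (Ioi_subset_Ici_self hu)).2

include h₁ in
private lemma s1_hasDerivAt {t : ℝ} (ht : 1 < t) :
    HasDerivAt s₁ ((1 - (s₁ t)⁻¹)⁻¹) t := by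
  have hy := s1_mem h₁ ht
  apply HasDerivAt.of_local_left_inverse (s1_continuousAt h₁ ht)
    (phiFn_hasDerivAt (ne_of_gt hy.1))
  · have : 1 < (s₁ t)⁻¹ := (one_lt_inv₀ hy.1).2 hy.2
    linarith
  · filter_upwards [isOpen_Ioi.mem_nhds ht] with u hu
    exact (h₁ u (Ioi_subset_Ici_self hu)).2

end branches
end Stmt13Aux

private lemma gk_core_int (k : ℕ) : IntegrableOn (fun x : ℝ => x ^ k * Real.exp (-x)) (Ioi 0) := by
  have h := Real.GammaIntegral_convergent (s := (k:ℝ) + 1) (by positivity)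
  apply h.congr_fun ?_ measurableSet_Ioi
  intro x hx
  dsimp only
  rw [add_sub_cancel_right, Real.rpow_natCast, mul_comm]

private lemma gk_core_val (k : ℕ) :
    ∫ x in Ioi (0:ℝ), x ^ k * Real.exp (-x) = (Nat.factorial k : ℝ) := by
  have h := Real.Gamma_eq_integral (s := (k:ℝ) + 1) (by positivity)
  rw [Real.Gamma_nat_eq_factorial] at h
  rw [h]
  apply setIntegral_congr_fun measurableSet_Ioi
  intro x hx
  dsimp only
  rw [add_sub_cancel_right, Real.rpow_natCast, mul_comm]

private lemma gk_int (k : ℕ) (hk : 0 < k) :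
    IntegrableOn (fun x : ℝ => x ^ k * Real.exp (-(k:ℝ) * x)) (Ioi 0) := by
  have hkp : (0:ℝ) < k := by exact_mod_cast hk
  have h1 : IntegrableOn (fun x : ℝ => ((k:ℝ) * x) ^ k * Real.exp (-((k:ℝ) * x))) (Ioi 0) := by
    have := (integrableOn_Ioi_comp_mul_left_iff (fun x : ℝ => x ^ k * Real.exp (-x)) 0 hkp)
    rw [mul_zero] at this
    exact this.2 (gk_core_int k)
  have h2 : IntegrableOn ((((k:ℝ) ^ k)⁻¹) • fun x : ℝ => ((k:ℝ) * x) ^ k * Real.exp (-((k:ℝ) * x))) (Ioi 0) :=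
    h1.smul (((k:ℝ) ^ k)⁻¹)
  apply h2.congr_fun ?_ measurableSet_Ioi
  intro x hx
  simp only [Pi.smul_apply, smul_eq_mul, mul_pow, neg_mul]
  field_simp

private lemma gk_val (k : ℕ) (hk : 0 < k) :
    ∫ x in Ioi (0:ℝ), x ^ k * Real.exp (-(k:ℝ) * x) = (Nat.factorial k : ℝ) / (k:ℝ) ^ (k + 1) := by
  have hkp : (0:ℝ) < k := by exact_mod_cast hk
  have h := integral_comp_mul_left_Ioi (fun x : ℝ => x ^ k * Real.exp (-x)) 0 hkp
  rw [mul_zero, gk_core_val k] at h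
  have h2 : ∫ x in Ioi (0:ℝ), ((k:ℝ) * x) ^ k * Real.exp (-((k:ℝ) * x)) = (k:ℝ)⁻¹ * (Nat.factorial k : ℝ) := h
  have h3 : ∫ x in Ioi (0:ℝ), ((k:ℝ) * x) ^ k * Real.exp (-((k:ℝ) * x))
      = (k:ℝ) ^ k * ∫ x in Ioi (0:ℝ), x ^ k * Real.exp (-(k:ℝ) * x) := by
    rw [← smul_eq_mul, ← integral_smul]
    apply setIntegral_congr_fun measurableSet_Ioi
    intro x hx
    simp only [smul_eq_mul, mul_pow, neg_mul]
    ring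
  rw [h3] at h2
  have hkk : ((k:ℝ) ^ k) ≠ 0 := by positivity
  field_simp at h2 ⊢
  rw [pow_succ]
  linarith [h2]

section key
variable {s₁ s₂ : ℝ → ℝ}
  (h₁ : ∀ t ∈ Ici (1 : ℝ), s₁ t ∈ Ioc (0 : ℝ) 1 ∧ s₁ t - Real.log (s₁ t) = t)
  (h₂ : ∀ t ∈ Ici (1 : ℝ), s₂ t ∈ Ici (1 : ℝ) ∧ s₂ t - Real.log (s₂ t) = t)

-- facts assumed proven elsewhere (from b.lean)
variable (hs2gt : ∀ {t : ℝ}, 1 < t → 1 < s₂ t)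
  (hs1mem : ∀ {t : ℝ}, 1 < t → s₁ t ∈ Ioo (0:ℝ) 1)
  (hs2img : s₂ '' Ioi 1 = Ioi (1:ℝ))
  (hs1img : s₁ '' Ioi 1 = Ioo (0:ℝ) 1)
  (hs2d : ∀ {t : ℝ}, 1 < t → HasDerivAt s₂ ((1 - (s₂ t)⁻¹)⁻¹) t)
  (hs1d : ∀ {t : ℝ}, 1 < t → HasDerivAt s₁ ((1 - (s₁ t)⁻¹)⁻¹) t)

-- from c.lean
variable (gk_int : ∀ (k : ℕ), 0 < k → IntegrableOn (fun x : ℝ => x ^ k * Real.exp (-(k:ℝ) * x)) (Ioi 0))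
  (gk_val : ∀ (k : ℕ), 0 < k → ∫ x in Ioi (0:ℝ), x ^ k * Real.exp (-(k:ℝ) * x) = (Nat.factorial k : ℝ) / (k:ℝ) ^ (k + 1))

include h₁ h₂ hs2gt hs1mem hs2img hs1img hs2d hs1d gk_int gk_val in
private lemma key_lemma (G : ℝ → ℝ)
    (hG : ∀ p, G p = deriv s₂ (1 + p) - deriv s₁ (1 + p)) (k : ℕ) (hk : 0 < k) :
    IntegrableOn (fun p : ℝ => G p * Real.exp (-(k:ℝ) * (1 + p))) (Ioi 0) ∧
    ∫ p in Ioi (0:ℝ), G p * Real.exp (-(k:ℝ) * (1 + p))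
      = (Nat.factorial k : ℝ) / (k:ℝ) ^ (k + 1) := by
  set g : ℝ → ℝ := fun x => x ^ k * Real.exp (-(k:ℝ) * x) with hg
  -- pointwise identity : for y > 0 with y - log y = t, g y = y^k e^{-ky} = e^{k log y - k y}
  have hgform : ∀ {y t : ℝ}, 0 < y → y - Real.log y = t → g y = Real.exp (-(k:ℝ) * t) := by
    intro y t hy hyt
    simp only [hg]
    rw [← Real.exp_log (pow_pos hy k), Real.log_pow, ← Real.exp_add]
    congr 1
    rw [← hyt]
    push_cast
    ring
  -- derivatives within
  have hd2 : ∀ t ∈ Ioi (1:ℝ), HasDerivWithinAt s₂ ((1 - (s₂ t)⁻¹)⁻¹) (Ioi 1) t :=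
    fun t ht => (hs2d ht).hasDerivWithinAt
  have hd1 : ∀ t ∈ Ioi (1:ℝ), HasDerivWithinAt s₁ ((1 - (s₁ t)⁻¹)⁻¹) (Ioi 1) t :=
    fun t ht => (hs1d ht).hasDerivWithinAt
  have hinj2 : InjOn s₂ (Ioi 1) := by
    intro a ha b hb hab
    have ha2 := (h₂ a (Ioi_subset_Ici_self ha)).2
    have hb2 := (h₂ b (Ioi_subset_Ici_self hb)).2
    rw [← ha2, ← hb2, hab]
  have hinj1 : InjOn s₁ (Ioi 1) := by
    intro a ha b hb hab
    have ha2 := (h₁ a (Ioi_subset_Ici_self ha)).2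
    have hb2 := (h₁ b (Ioi_subset_Ici_self hb)).2
    rw [← ha2, ← hb2, hab]
  -- positivity of D₂, negativity of D₁
  have hD2pos : ∀ {t : ℝ}, 1 < t → 0 < (1 - (s₂ t)⁻¹)⁻¹ := by
    intro t ht
    have h1 : 1 < s₂ t := hs2gt ht
    have h2 : (s₂ t)⁻¹ < 1 := inv_lt_one_of_one_lt₀ h1
    have h0 : 0 < 1 - (s₂ t)⁻¹ := by linarith
    exact inv_pos.2 h0
  have hD1neg : ∀ {t : ℝ}, 1 < t → (1 - (s₁ t)⁻¹)⁻¹ < 0 := by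
    intro t ht
    have h1 := hs1mem ht
    have : 1 < (s₁ t)⁻¹ := (one_lt_inv₀ h1.1).2 h1.2
    have : 1 - (s₁ t)⁻¹ < 0 := by linarith
    exact inv_lt_zero.2 this
  -- integrand simplifications
  have heq2 : ∀ t ∈ Ioi (1:ℝ),
      |(1 - (s₂ t)⁻¹)⁻¹| • g (s₂ t) = (1 - (s₂ t)⁻¹)⁻¹ * Real.exp (-(k:ℝ) * t) := by
    intro t ht
    have ht' : (1:ℝ) < t := ht
    rw [abs_of_pos (hD2pos ht'), smul_eq_mul,
      hgform (lt_trans one_pos (hs2gt ht')) (h₂ t (le_of_lt ht')).2]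
  have heq1 : ∀ t ∈ Ioi (1:ℝ),
      |(1 - (s₁ t)⁻¹)⁻¹| • g (s₁ t) = -((1 - (s₁ t)⁻¹)⁻¹ * Real.exp (-(k:ℝ) * t)) := by
    intro t ht
    have ht' : (1:ℝ) < t := ht
    rw [abs_of_neg (hD1neg ht'), smul_eq_mul,
      hgform (hs1mem ht').1 (h₁ t (le_of_lt ht')).2, neg_mul]
  -- change of variables, s₂ branch
  have hval2 : ∫ x in Ioi (1:ℝ), g x
      = ∫ t in Ioi (1:ℝ), (1 - (s₂ t)⁻¹)⁻¹ * Real.exp (-(k:ℝ) * t) := by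
    have h := integral_image_eq_integral_abs_deriv_smul measurableSet_Ioi hd2 hinj2 g
    rw [hs2img] at h
    rw [h]
    exact setIntegral_congr_fun measurableSet_Ioi heq2
  have hval1 : ∫ x in Ioo (0:ℝ) 1, g x
      = ∫ t in Ioi (1:ℝ), -((1 - (s₁ t)⁻¹)⁻¹ * Real.exp (-(k:ℝ) * t)) := by
    have h := integral_image_eq_integral_abs_deriv_smul measurableSet_Ioi hd1 hinj1 g
    rw [hs1img] at h
    rw [h]
    exact setIntegral_congr_fun measurableSet_Ioi heq1
  -- integrability on pieces
  have hgint : IntegrableOn g (Ioi 0) := gk_int k hk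
  have hgint2 : IntegrableOn g (Ioi 1) := hgint.mono_set (Ioi_subset_Ioi zero_le_one)
  have hgint1 : IntegrableOn g (Ioo 0 1) := hgint.mono_set Ioo_subset_Ioi_self
  have hint2 : IntegrableOn (fun t => (1 - (s₂ t)⁻¹)⁻¹ * Real.exp (-(k:ℝ) * t)) (Ioi 1) := by
    have := (integrableOn_image_iff_integrableOn_abs_deriv_smul measurableSet_Ioi hd2 hinj2 g).1
      (by rwa [hs2img])
    exact (this.congr_fun heq2 measurableSet_Ioi)
  have hint1 : IntegrableOn (fun t => -((1 - (s₁ t)⁻¹)⁻¹ * Real.exp (-(k:ℝ) * t))) (Ioi 1) := by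
    have := (integrableOn_image_iff_integrableOn_abs_deriv_smul measurableSet_Ioi hd1 hinj1 g).1
      (by rwa [hs1img])
    exact (this.congr_fun heq1 measurableSet_Ioi)
  -- splitting the domain
  have hsplit : ∫ x in Ioi (0:ℝ), g x = (∫ x in Ioo (0:ℝ) 1, g x) + ∫ x in Ioi (1:ℝ), g x := by
    have hunion : Ioo (0:ℝ) 1 ∪ Ici 1 = Ioi 0 := Ioo_union_Ici_eq_Ioi zero_lt_one
    rw [← hunion, setIntegral_union (by
        rw [disjoint_left]; rintro x ⟨_, hx1⟩ hx2; exact absurd (mem_Ici.1 hx2) (not_le.2 hx1))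
      measurableSet_Ici hgint1
      (hgint.mono_set (by rw [← hunion]; exact subset_union_right)),
      integral_Ici_eq_integral_Ioi]
  -- combine
  have hcomb : ∫ x in Ioi (0:ℝ), g x
      = ∫ t in Ioi (1:ℝ), (deriv s₂ t - deriv s₁ t) * Real.exp (-(k:ℝ) * t) := by
    rw [hsplit, hval1, hval2, ← integral_add hint1 hint2]
    
    apply setIntegral_congr_fun measurableSet_Ioi
    intro t ht
    have ht' : (1:ℝ) < t := ht
    dsimp only [Pi.add_apply]
    rw [(hs2d ht').deriv, (hs1d ht').deriv]
    ring
  -- translation t = 1 + p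
  have htd : ∀ p ∈ Ioi (0:ℝ), HasDerivWithinAt (fun p : ℝ => 1 + p) 1 (Ioi 0) p :=
    fun p _ => ((hasDerivAt_id p).const_add 1).hasDerivWithinAt
  have htinj : InjOn (fun p : ℝ => 1 + p) (Ioi 0) := fun a _ b _ hab => by
    simpa using hab
  have htimg : (fun p : ℝ => 1 + p) '' Ioi 0 = Ioi (1:ℝ) := by
    ext u
    simp only [mem_image, mem_Ioi]
    constructor
    · rintro ⟨p, hp, rfl⟩; linarith
    · intro hu; exact ⟨u - 1, by linarith, by ring⟩
  set F : ℝ → ℝ := fun t => (deriv s₂ t - deriv s₁ t) * Real.exp (-(k:ℝ) * t) with hF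
  have htrans : ∫ t in Ioi (1:ℝ), F t = ∫ p in Ioi (0:ℝ), G p * Real.exp (-(k:ℝ) * (1 + p)) := by
    rw [← htimg, integral_image_eq_integral_abs_deriv_smul measurableSet_Ioi htd htinj F]
    apply setIntegral_congr_fun measurableSet_Ioi
    intro p _
    simp only [hF, abs_one, one_smul, hG p]
  have hFint : IntegrableOn F (Ioi 1) := by
    have hadd : IntegrableOn ((fun t => (1 - (s₂ t)⁻¹)⁻¹ * Real.exp (-(k:ℝ) * t)) + fun t => -((1 - (s₁ t)⁻¹)⁻¹ * Real.exp (-(k:ℝ) * t))) (Ioi 1) := hint2.add hint1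
    apply hadd.congr_fun ?_ measurableSet_Ioi
    intro t ht
    have ht' : (1:ℝ) < t := ht
    dsimp only [Pi.add_apply]
    rw [hF]
    dsimp only
    rw [(hs2d ht').deriv, (hs1d ht').deriv]
    ring
  have htransint : IntegrableOn (fun p : ℝ => G p * Real.exp (-(k:ℝ) * (1 + p))) (Ioi 0) := by
    have := (integrableOn_image_iff_integrableOn_abs_deriv_smul measurableSet_Ioi htd htinj F).1
      (by rwa [htimg])
    apply this.congr_fun ?_ measurableSet_Ioi
    intro p _
    simp only [hF, abs_one, one_smul, hG p]
  refine ⟨htransint, ?_⟩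
  rw [← htrans, ← hcomb, hg, gk_val k hk]
end key

private lemma coef_le (n : ℕ) : ‖(1 / ((n:ℂ))^(n+1))‖ ≤ 1 / (n.factorial : ℝ) := by
  rcases Nat.eq_zero_or_pos n with h | h
  · subst h; simp
  · rw [norm_div, norm_one, norm_pow, Complex.norm_natCast]
    apply one_div_le_one_div_of_le (by exact_mod_cast Nat.factorial_pos n)
    calc (n.factorial : ℝ) ≤ (n:ℝ)^n := by exact_mod_cast Nat.factorial_le_pow n
      _ ≤ (n:ℝ)^(n+1) := by
        apply pow_le_pow_right₀ ?_ (Nat.le_succ n)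
        exact_mod_cast h

private lemma f3_differentiable :
    Differentiable ℂ (fun z : ℂ => ∑' k : ℕ, z ^ (k + 1) / (((k : ℂ) + 1) ^ (k + 2))) := by
  set c : ℕ → ℂ := fun n => 1 / ((n:ℂ))^(n+1) with hc
  set p := FormalMultilinearSeries.ofScalars ℂ c with hp
  have hnorm : ∀ n, ‖p n‖ ≤ 1 / (n.factorial : ℝ) := by
    intro n
    have hpn : p n = c n • ContinuousMultilinearMap.mkPiAlgebraFin ℂ n ℂ := rfl
    rw [hpn, norm_smul (α := ℂ) (c n) (ContinuousMultilinearMap.mkPiAlgebraFin ℂ n ℂ),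
      ContinuousMultilinearMap.norm_mkPiAlgebraFin, mul_one]
    exact coef_le n
  have hrad : p.radius = ⊤ := by
    apply p.radius_eq_top_of_summable_norm
    intro r
    apply Summable.of_nonneg_of_le (fun n => by positivity)
      (fun n => ?_) (Real.summable_pow_div_factorial (r:ℝ))
    calc ‖p n‖ * (r:ℝ)^n ≤ (1 / (n.factorial : ℝ)) * (r:ℝ)^n :=
          mul_le_mul_of_nonneg_right (hnorm n) (by positivity)
      _ = (r:ℝ)^n / (n.factorial : ℝ) := by ring
  have hball := p.hasFPowerSeriesOnBall (hrad ▸ ENNReal.zero_lt_top)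
  have hdiff : Differentiable ℂ p.sum := by
    intro z
    have hz : z ∈ Metric.eball (0:ℂ) p.radius := by
      rw [Metric.mem_eball, hrad]; exact edist_lt_top z 0
    exact hball.differentiableOn.differentiableAt (Metric.isOpen_eball.mem_nhds hz)
  have hfun : (fun z : ℂ => ∑' k : ℕ, z ^ (k + 1) / (((k : ℂ) + 1) ^ (k + 2))) = p.sum := by
    funext z
    have hsum : p.sum z = ∑' n : ℕ, c n • z ^ n := by
      apply tsum_congr
      intro n
      exact FormalMultilinearSeries.ofScalars_apply_eq c z n
    have hsummable : Summable (fun n : ℕ => c n • z ^ n) := by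
      apply Summable.of_norm_bounded (Real.summable_pow_div_factorial ‖z‖)
      intro n
      rw [norm_smul, norm_pow]
      calc ‖c n‖ * ‖z‖^n ≤ (1 / (n.factorial : ℝ)) * ‖z‖^n :=
            mul_le_mul_of_nonneg_right (coef_le n) (by positivity)
        _ = ‖z‖^n / (n.factorial : ℝ) := by ring
    rw [hsum, Summable.tsum_eq_zero_add hsummable]
    have h0 : c 0 • z ^ 0 = 0 := by simp [hc]
    rw [h0, zero_add]
    apply tsum_congr
    intro k
    have : ((k:ℂ) + 1) = ((k+1 : ℕ) : ℂ) := by push_cast; ring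
    rw [this]
    simp only [hc, smul_eq_mul]
    ring
  rw [hfun]
  exact hdiff

private lemma final_eq (G : ℝ → ℝ)
    (hGnn : ∀ p ∈ Ioi (0:ℝ), 0 ≤ G p)
    (hkeyi : ∀ k : ℕ, 0 < k →
      IntegrableOn (fun p : ℝ => G p * Real.exp (-(k:ℝ) * (1 + p))) (Ioi 0))
    (hkeyv : ∀ k : ℕ, 0 < k →
      ∫ p in Ioi (0:ℝ), G p * Real.exp (-(k:ℝ) * (1 + p))
        = (Nat.factorial k : ℝ) / (k:ℝ) ^ (k + 1)) (z : ℂ) :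
    ∑' k : ℕ, z ^ (k + 1) / (((k : ℂ) + 1) ^ (k + 2)) =
      ∫ u in Ioi (0 : ℝ),
        (((1 + u)⁻¹ * G (Real.log (1 + u)) : ℝ) : ℂ) *
          (Complex.exp (z * (Real.exp (-1) : ℝ) / ((1 + u : ℝ) : ℂ)) - 1) := by
  set H : ℝ → ℂ := fun u => (((1 + u)⁻¹ * G (Real.log (1 + u)) : ℝ) : ℂ) *
          (Complex.exp (z * (Real.exp (-1) : ℝ) / ((1 + u : ℝ) : ℂ)) - 1) with hH
  -- Step A : substitution u = e^p - 1
  have hEd : ∀ p ∈ Ioi (0:ℝ), HasDerivWithinAt (fun p => Real.exp p - 1) (Real.exp p) (Ioi 0) p :=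
    fun p _ => ((Real.hasDerivAt_exp p).sub_const 1).hasDerivWithinAt
  have hEinj : InjOn (fun p => Real.exp p - 1) (Ioi 0) := by
    intro a _ b _ h
    have h' : Real.exp a = Real.exp b := by dsimp only at h; linarith
    exact Real.exp_injective h'
  have hEimg : (fun p => Real.exp p - 1) '' Ioi 0 = Ioi (0:ℝ) := by
    ext u
    simp only [mem_image, mem_Ioi]
    constructor
    · rintro ⟨p, hp, rfl⟩
      have : 1 < Real.exp p := by
        rw [← Real.exp_zero]; exact Real.exp_lt_exp.2 hp
      linarith
    · intro hu
      refine ⟨Real.log (1 + u), Real.log_pos (by linarith), ?_⟩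
      rw [Real.exp_log (by linarith)]; ring
  have hA : (∫ u in Ioi (0:ℝ), H u)
      = ∫ p in Ioi (0:ℝ), (G p : ℂ) * (Complex.exp (z * (Real.exp (-(1+p)) : ℝ)) - 1) := by
    have h := integral_image_eq_integral_abs_deriv_smul measurableSet_Ioi hEd hEinj H
    rw [hEimg] at h
    rw [h]
    apply setIntegral_congr_fun measurableSet_Ioi
    intro p _
    have hep : (0:ℝ) < Real.exp p := Real.exp_pos p
    have h1p : (1:ℝ) + (Real.exp p - 1) = Real.exp p := by ring
    rw [hH]
    dsimp only
    rw [h1p, Real.log_exp, abs_of_pos hep]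
    have hdiv : z * ((Real.exp (-1) : ℝ) : ℂ) / ((Real.exp p : ℝ) : ℂ)
        = z * ((Real.exp (-(1+p)) : ℝ) : ℂ) := by
      have harg : (-1 : ℝ) - p = -(1+p) := by ring
      rw [mul_div_assoc, ← Complex.ofReal_div, ← Real.exp_sub, harg]
    rw [hdiv, Complex.real_smul, ← mul_assoc, ← Complex.ofReal_mul]
    congr 2
    field_simp
  -- Step B : series expansion of the integrand
  set Fn : ℕ → ℝ → ℂ := fun n p =>
    (G p * Real.exp (-((n+1:ℕ):ℝ) * (1 + p))) • (z ^ (n+1) / ((Nat.factorial (n+1) : ℂ))) with hFn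
  have hB : ∀ p : ℝ, (G p : ℂ) * (Complex.exp (z * (Real.exp (-(1+p)) : ℝ)) - 1)
      = ∑' n : ℕ, Fn n p := by
    intro p
    set w : ℂ := ((Real.exp (-(1+p)) : ℝ) : ℂ) with hw
    have hexp : Complex.exp (z * w) - 1 = ∑' n : ℕ, (z*w)^(n+1)/((Nat.factorial (n+1) : ℂ)) := by
      rw [Complex.exp_eq_exp_ℂ, NormedSpace.exp_eq_tsum_div]
      dsimp only
      rw [Summable.tsum_eq_zero_add (NormedSpace.expSeries_div_summable (z*w))]
      simp
    rw [hexp, ← tsum_mul_left]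
    apply tsum_congr
    intro n
    have harg : ((n+1:ℕ):ℝ) * (-(1+p)) = -((n+1:ℕ):ℝ) * (1+p) := by ring
    have hpow : (z*w)^(n+1) = z^(n+1) * ((Real.exp (-((n+1:ℕ):ℝ) * (1 + p)) : ℝ) : ℂ) := by
      rw [mul_pow, hw, ← Complex.ofReal_pow, ← Real.exp_nat_mul, harg]
    rw [hpow, hFn]
    dsimp only
    rw [Complex.real_smul]
    push_cast
    ring
  -- Step C : integrability and summability of norms
  have hFnint : ∀ n : ℕ, Integrable (Fn n) (volume.restrict (Ioi 0)) := fun n =>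
    ((hkeyi (n+1) n.succ_pos)).smul_const _
  have hnormval : ∀ n : ℕ, ∫ p in Ioi (0:ℝ), ‖Fn n p‖
      = ((Nat.factorial (n+1) : ℝ) / ((n+1:ℕ):ℝ) ^ (n + 2)) * ‖z ^ (n+1) / ((Nat.factorial (n+1) : ℂ))‖ := by
    intro n
    have h1 : ∀ p ∈ Ioi (0:ℝ), ‖Fn n p‖
        = (G p * Real.exp (-((n+1:ℕ):ℝ) * (1 + p))) * ‖z ^ (n+1) / ((Nat.factorial (n+1) : ℂ))‖ := by
      intro p hp
      rw [hFn]
      dsimp only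
      rw [norm_smul, Real.norm_eq_abs, abs_of_nonneg]
      exact mul_nonneg (hGnn p hp) (Real.exp_pos _).le
    rw [setIntegral_congr_fun measurableSet_Ioi h1, integral_mul_const, hkeyv (n+1) n.succ_pos]
  have hsumnorm : Summable (fun n : ℕ => ∫ p in Ioi (0:ℝ), ‖Fn n p‖) := by
    have hsum2 : Summable (fun n : ℕ => ‖z‖^(n+1) / ((Nat.factorial (n+1)) : ℝ)) :=
      (Real.summable_pow_div_factorial ‖z‖).comp_injective Nat.succ_injective
    apply Summable.of_nonneg_of_le (fun n => ?_) (fun n => ?_) hsum2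
    · rw [hnormval n]; positivity
    · rw [hnormval n]
      have hfle : (Nat.factorial (n+1) : ℝ) / ((n+1:ℕ):ℝ) ^ (n + 2) ≤ 1 := by
        rw [div_le_one (by positivity)]
        calc (Nat.factorial (n+1) : ℝ) ≤ ((n+1:ℕ):ℝ)^(n+1) := by
              exact_mod_cast Nat.factorial_le_pow (n+1)
          _ ≤ ((n+1:ℕ):ℝ)^(n+2) := by
            apply pow_le_pow_right₀ (by exact_mod_cast Nat.succ_le_succ (Nat.zero_le n)) (by omega)
      have hnz : ‖z ^ (n+1) / ((Nat.factorial (n+1) : ℂ))‖ = ‖z‖^(n+1) / ((Nat.factorial (n+1)) : ℝ) := by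
        rw [norm_div, norm_pow]
        congr 1
        simp
      rw [hnz]
      calc _ ≤ 1 * (‖z‖^(n+1) / ((Nat.factorial (n+1)) : ℝ)) :=
            mul_le_mul_of_nonneg_right hfle (by positivity)
        _ = _ := one_mul _
  have hswap := MeasureTheory.integral_tsum_of_summable_integral_norm hFnint hsumnorm
  -- Step D : value of each integral
  have hval : ∀ n : ℕ, ∫ p in Ioi (0:ℝ), Fn n p = z ^ (n + 1) / (((n : ℂ) + 1) ^ (n + 2)) := by
    intro n
    rw [hFn]
    dsimp only
    rw [integral_smul_const, hkeyv (n+1) n.succ_pos, Complex.real_smul]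
    have hne1 : ((Nat.factorial (n+1) : ℂ)) ≠ 0 :=
      Nat.cast_ne_zero.2 (Nat.factorial_ne_zero (n+1))
    have hne2 : ((n:ℂ) + 1) ≠ 0 := Nat.cast_add_one_ne_zero n
    push_cast
    field_simp
  calc ∑' k : ℕ, z ^ (k + 1) / (((k : ℂ) + 1) ^ (k + 2))
      = ∑' n : ℕ, ∫ p in Ioi (0:ℝ), Fn n p := tsum_congr (fun n => (hval n).symm)
    _ = ∫ p in Ioi (0:ℝ), ∑' n : ℕ, Fn n p := hswap
    _ = ∫ p in Ioi (0:ℝ), (G p : ℂ) * (Complex.exp (z * (Real.exp (-(1+p)) : ℝ)) - 1) := by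
        apply integral_congr_ae
        exact Filter.Eventually.of_forall (fun p => (hB p).symm)
    _ = ∫ u in Ioi (0:ℝ), H u := hA.symm

end Stmt13AuxAll


theorem stmt13 (s₁ s₂ : ℝ → ℝ)
    (h₁ : ∀ t ∈ Ici (1 : ℝ), s₁ t ∈ Ioc (0 : ℝ) 1 ∧ s₁ t - Real.log (s₁ t) = t)
    (h₂ : ∀ t ∈ Ici (1 : ℝ), s₂ t ∈ Ici (1 : ℝ) ∧ s₂ t - Real.log (s₂ t) = t)
    (G : ℝ → ℝ) (hG : ∀ p, G p = deriv s₂ (1 + p) - deriv s₁ (1 + p))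
    (f₃ : ℂ → ℂ)
    (hf : ∀ z : ℂ, f₃ z = ∑' k : ℕ, z ^ (k + 1) / (((k : ℂ) + 1) ^ (k + 2))) :
    Differentiable ℂ f₃ ∧
    ∀ z : ℂ, f₃ z =
      ∫ u in Ioi (0 : ℝ),
        (((1 + u)⁻¹ * G (Real.log (1 + u)) : ℝ) : ℂ) *
          (Complex.exp (z * (Real.exp (-1) : ℝ) / ((1 + u : ℝ) : ℂ)) - 1) := by
  have hkey := key_lemma h₁ h₂ (fun {t} ht => s2_gt_one h₂ ht)
    (fun {t} ht => s1_mem h₁ ht) (s2_image h₂) (s1_image h₁)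
    (fun {t} ht => s2_hasDerivAt h₂ ht) (fun {t} ht => s1_hasDerivAt h₁ ht)
    gk_int gk_val G hG
  have hGnn : ∀ p ∈ Ioi (0:ℝ), 0 ≤ G p := by
    intro p hp
    have hp' : (1:ℝ) < 1 + p := by
      have := mem_Ioi.1 hp
      linarith
    rw [hG p, (s2_hasDerivAt h₂ hp').deriv, (s1_hasDerivAt h₁ hp').deriv]
    have h2pos : 0 < (1 - (s₂ (1+p))⁻¹)⁻¹ := by
      have h1 : 1 < s₂ (1+p) := s2_gt_one h₂ hp'
      have h2 : (s₂ (1+p))⁻¹ < 1 := inv_lt_one_of_one_lt₀ h1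
      have h0 : 0 < 1 - (s₂ (1+p))⁻¹ := by linarith
      exact inv_pos.2 h0
    have h1neg : (1 - (s₁ (1+p))⁻¹)⁻¹ < 0 := by
      have h1 := s1_mem h₁ hp'
      have h2 : 1 < (s₁ (1+p))⁻¹ := (one_lt_inv₀ h1.1).2 h1.2
      have h0 : 1 - (s₁ (1+p))⁻¹ < 0 := by linarith
      exact inv_lt_zero.2 h0
    linarith
  constructor
  · have hfun : f₃ = fun z : ℂ => ∑' k : ℕ, z ^ (k + 1) / (((k : ℂ) + 1) ^ (k + 2)) :=
      funext hf
    rw [hfun]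
    exact f3_differentiable
  · intro z
    rw [hf z]
    exact final_eq G hGnn (fun k hk => (hkey k hk).1) (fun k hk => (hkey k hk).2) z
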